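/- Let d ≥ 2 and let μ(v) = (2π)^{-d/2} e^{−|v|²/2}. For f in the Schwartz space S(ℝ^d), define L_{2,L} f = −μ^{-1/2} Q_L(μ^{1/2} f, μ), where Q_L(g,h)(v) = ∇_v · (∫_{ℝ^d} a(v−v_*)(g(v_*)(∇h)(v) − (∇g)(v_*) h(v)) dv_*) with a(v) = |v|² Id − v⊗v. Then, with Ψ₀ = μ^{1/2}, Φ_j(v) = v_j Ψ₀(v), Φ_{ij}(v) = v_i v_j Ψ₀(v) for i ≠ j, and Θ_j(v) = 2^{-1/2}(v_j² − 1)Ψ₀(v), one has L_{2,L} f = −2(d−1) Σ_{j=1}^d ⟨f, Φ_j⟩_{L²} Φ_j + Σ_{i≠j} ⟨f, Φ_{ij}⟩_{L²} Φ_{ij} − 2 Σ_{i≠j} ⟨f, Θ_i⟩_{L²} Θ_j. -/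

import Mathlib

open MeasureTheory Real

/-- Partial derivative `∂_j g` of a real-valued function on `ℝ^d`. -/
noncomputable def pd (d : ℕ) (j : Fin d) (g : (Fin d → ℝ) → ℝ) :
    (Fin d → ℝ) → ℝ :=
  fun v => fderiv ℝ g v (Pi.single j 1)

/-- The entries `a_{ij}(v) = |v|²δ_{ij} − v_i v_j` of the matrix
`a(v) = |v|² Id − v⊗v`. -/
noncomputable def aMat (d : ℕ) (i j : Fin d) (w : Fin d → ℝ) : ℝ :=
  (if i = j then ∑ k : Fin d, (w k) ^ 2 else 0) - w i * w j

/-- The Landau collision operator with Maxwellian molecules: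
`Q_L(g,h)(v) = ∇_v · (∫ a(v−v_*)(g(v_*)(∇h)(v) − (∇g)(v_*)h(v)) dv_*)`. -/
noncomputable def QL (d : ℕ) (g h : (Fin d → ℝ) → ℝ) : (Fin d → ℝ) → ℝ :=
  fun v => ∑ i : Fin d,
    pd d i (fun u => ∑ j : Fin d,
      ∫ w : Fin d → ℝ, aMat d i j (u - w) * (g w * pd d j h u - pd d j g w * h u)) v

/-- The Maxwellian equilibrium distribution `μ`. -/
noncomputable def maxw (d : ℕ) (v : Fin d → ℝ) : ℝ :=
  (2 * Real.pi) ^ (-(d : ℝ) / 2) * Real.exp (-(∑ k : Fin d, (v k) ^ 2) / 2)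

/-- The square root `Ψ₀ = μ^{1/2}` of the Maxwellian distribution. -/
noncomputable def Psi0 (d : ℕ) (v : Fin d → ℝ) : ℝ :=
  (2 * Real.pi) ^ (-(d : ℝ) / 4) * Real.exp (-(∑ k : Fin d, (v k) ^ 2) / 4)

/-- The degree-1 Hermite functions `Φ_j = v_j Ψ₀`. -/
noncomputable def PhiH (d : ℕ) (j : Fin d) (v : Fin d → ℝ) : ℝ := v j * Psi0 d v

/-- The degree-2 Hermite functions `Φ_{ij} = v_i v_j Ψ₀` (`i ≠ j`). -/
noncomputable def PhiH2 (d : ℕ) (i j : Fin d) (v : Fin d → ℝ) : ℝ :=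
  v i * v j * Psi0 d v

/-- The degree-2 Hermite functions `Θ_j = 2^{-1/2}(v_j² − 1)Ψ₀`. -/
noncomputable def ThetaH (d : ℕ) (j : Fin d) (v : Fin d → ℝ) : ℝ :=
  ((v j) ^ 2 - 1) / Real.sqrt 2 * Psi0 d v

noncomputable def ell (d : ℕ) (v : Fin d → ℝ) : (Fin d → ℝ) →L[ℝ] ℝ :=
  ∑ k : Fin d, v k • ContinuousLinearMap.proj k

lemma ell_apply (d : ℕ) (v x : Fin d → ℝ) : ell d v x = ∑ k, v k * x k := by
  simp [ell, ContinuousLinearMap.sum_apply]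

lemma ell_single (d : ℕ) (v : Fin d → ℝ) (i : Fin d) : ell d v (Pi.single i 1) = v i := by
  rw [ell_apply]
  rw [Finset.sum_eq_single i]
  · simp
  · intro b _ hb; simp [Pi.single_apply, hb]
  · simp

lemma sumSq_hasFDerivAt (d : ℕ) (v : Fin d → ℝ) :
    HasFDerivAt (fun u : Fin d → ℝ => ∑ k, (u k) ^ 2) ((2:ℝ) • ell d v) v := by
  have : ((2:ℝ) • ell d v) = ∑ k : Fin d, (v k • ContinuousLinearMap.proj k +
      v k • ContinuousLinearMap.proj k) := by
    simp [ell, Finset.smul_sum, two_smul]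
  rw [this]
  apply HasFDerivAt.fun_sum
  intro k _
  have h := hasFDerivAt_apply (𝕜 := ℝ) k v
  simpa [pow_two] using h.fun_mul h

lemma maxw_eq_alt (d : ℕ) :
    maxw d = fun u : Fin d → ℝ =>
      (2 * Real.pi) ^ (-(d : ℝ) / 2) * Real.exp ((-2⁻¹ : ℝ) * ∑ k, (u k) ^ 2) := by
  funext u; rw [maxw]; congr 1; ring

lemma psi0_eq_alt (d : ℕ) :
    Psi0 d = fun u : Fin d → ℝ =>
      (2 * Real.pi) ^ (-(d : ℝ) / 4) * Real.exp ((-4⁻¹ : ℝ) * ∑ k, (u k) ^ 2) := by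
  funext u; rw [Psi0]; congr 1; ring

lemma maxw_hasFDerivAt (d : ℕ) (v : Fin d → ℝ) :
    HasFDerivAt (maxw d) ((-(maxw d v)) • ell d v) v := by
  have h1 : HasFDerivAt (fun u : Fin d → ℝ => (-2⁻¹ : ℝ) * ∑ k, (u k) ^ 2)
      ((-2⁻¹ : ℝ) • ((2:ℝ) • ell d v)) v := (sumSq_hasFDerivAt d v).const_mul _
  have h3 := (h1.exp).const_mul ((2 * Real.pi) ^ (-(d : ℝ) / 2))
  rw [maxw_eq_alt d]
  refine h3.congr_fderiv ?_
  beta_reduce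
  rw [smul_smul, smul_smul, smul_smul]
  congr 1
  ring

lemma psi0_hasFDerivAt (d : ℕ) (v : Fin d → ℝ) :
    HasFDerivAt (Psi0 d) ((-(Psi0 d v) / 2) • ell d v) v := by
  have h1 : HasFDerivAt (fun u : Fin d → ℝ => (-4⁻¹ : ℝ) * ∑ k, (u k) ^ 2)
      ((-4⁻¹ : ℝ) • ((2:ℝ) • ell d v)) v := (sumSq_hasFDerivAt d v).const_mul _
  have h3 := (h1.exp).const_mul ((2 * Real.pi) ^ (-(d : ℝ) / 4))
  rw [psi0_eq_alt d]
  refine h3.congr_fderiv ?_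
  beta_reduce
  rw [smul_smul, smul_smul, smul_smul]
  congr 1
  ring
lemma pd_maxw (d : ℕ) (j : Fin d) (u : Fin d → ℝ) :
    pd d j (maxw d) u = -(u j) * maxw d u := by
  rw [pd, (maxw_hasFDerivAt d u).fderiv]
  simp [ell_single, mul_comm]

lemma pd_psi0 (d : ℕ) (j : Fin d) (u : Fin d → ℝ) :
    pd d j (Psi0 d) u = -(u j) / 2 * Psi0 d u := by
  rw [pd, (psi0_hasFDerivAt d u).fderiv]
  simp [ell_single]
  ring

lemma maxw_diff (d : ℕ) : Differentiable ℝ (maxw d) :=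
  fun v => (maxw_hasFDerivAt d v).differentiableAt

lemma psi0_diff (d : ℕ) : Differentiable ℝ (Psi0 d) :=
  fun v => (psi0_hasFDerivAt d v).differentiableAt

lemma psi0_cont (d : ℕ) : Continuous (Psi0 d) := (psi0_diff d).continuous

lemma psi0_pos (d : ℕ) (v : Fin d → ℝ) : 0 < Psi0 d v := by
  apply mul_pos
  · positivity
  · exact Real.exp_pos _

lemma psi0_le (d : ℕ) (v : Fin d → ℝ) : Psi0 d v ≤ (2 * Real.pi) ^ (-(d : ℝ) / 4) := by
  have h : Real.exp (-(∑ k : Fin d, (v k) ^ 2) / 4) ≤ 1 := by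
    apply Real.exp_le_one_iff.2
    have : (0:ℝ) ≤ ∑ k : Fin d, (v k) ^ 2 := Finset.sum_nonneg fun k _ => sq_nonneg _
    linarith
  have hc : (0:ℝ) < (2 * Real.pi) ^ (-(d : ℝ) / 4) := by positivity
  calc Psi0 d v ≤ (2 * Real.pi) ^ (-(d : ℝ) / 4) * 1 := by
        apply mul_le_mul_of_nonneg_left h hc.le
    _ = _ := mul_one _

lemma maxw_eq_sq (d : ℕ) (v : Fin d → ℝ) : maxw d v = Psi0 d v * Psi0 d v := by
  rw [maxw, Psi0]
  rw [mul_mul_mul_comm, ← Real.exp_add, ← Real.rpow_add (by positivity)]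
  congr 1
  · congr 1
    ring
  · congr 1
    ring

lemma abs_aMat_le (d : ℕ) (i j : Fin d) (z : Fin d → ℝ) :
    |aMat d i j z| ≤ ((d:ℝ) + 1) * ‖z‖ ^ 2 := by
  have hk : ∀ k, |z k| ≤ ‖z‖ := fun k => by
    simpa using norm_le_pi_norm z k
  have h1 : |(if i = j then ∑ k : Fin d, (z k) ^ 2 else 0)| ≤ (d:ℝ) * ‖z‖ ^ 2 := by
    split
    · rw [abs_of_nonneg (Finset.sum_nonneg fun k _ => sq_nonneg _)]
      calc ∑ k : Fin d, (z k) ^ 2 ≤ ∑ _k : Fin d, ‖z‖ ^ 2 := by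
            apply Finset.sum_le_sum
            intro k _
            calc (z k)^2 = |z k|^2 := (sq_abs _).symm
              _ ≤ ‖z‖^2 := pow_le_pow_left₀ (abs_nonneg _) (hk k) 2
        _ = (d:ℝ) * ‖z‖ ^ 2 := by simp [mul_comm]
    · simp
      positivity
  have h2 : |z i * z j| ≤ ‖z‖ ^ 2 := by
    rw [abs_mul, sq]
    exact mul_le_mul (hk i) (hk j) (abs_nonneg _) (norm_nonneg _)
  calc |aMat d i j z| ≤ |(if i = j then ∑ k : Fin d, (z k) ^ 2 else 0)| + |z i * z j| :=
        abs_sub _ _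
    _ ≤ (d:ℝ) * ‖z‖ ^ 2 + ‖z‖ ^ 2 := add_le_add h1 h2
    _ = ((d:ℝ) + 1) * ‖z‖ ^ 2 := by ring

lemma aMat_cont (d : ℕ) (i j : Fin d) (u : Fin d → ℝ) :
    Continuous (fun w : Fin d → ℝ => aMat d i j (u - w)) := by
  unfold aMat
  by_cases h : i = j <;> simp [h] <;> fun_prop

/-- master integrability lemma -/
lemma integrable_of_poly_bound (d k : ℕ) (F : SchwartzMap (Fin d → ℝ) ℝ) (C : ℝ)
    (φ : (Fin d → ℝ) → ℝ) (hm : AEStronglyMeasurable φ volume)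
    (hb : ∀ w, |φ w| ≤ C * ((1 + ‖w‖) ^ k * |F w|)) : Integrable φ volume := by
  have hint : Integrable (fun w : Fin d → ℝ =>
      |C| * (2 ^ k * (‖F w‖ + ‖w‖ ^ k * ‖F w‖))) volume := by
    exact ((F.integrable.norm.add (F.integrable_pow_mul volume k)).const_mul _).const_mul _
  apply hint.mono' hm
  filter_upwards with w
  have h1 : (1 + ‖w‖) ^ k ≤ 2 ^ k * (1 + ‖w‖ ^ k) := by
    have hbase : 1 + ‖w‖ ≤ 2 * max 1 ‖w‖ := by
      rcases le_total ‖w‖ 1 with h | h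
      · calc 1 + ‖w‖ ≤ 2 * 1 := by linarith
          _ ≤ 2 * max 1 ‖w‖ := by
            have := le_max_left (1:ℝ) ‖w‖; linarith
      · calc 1 + ‖w‖ ≤ 2 * ‖w‖ := by linarith
          _ ≤ 2 * max 1 ‖w‖ := by
            have := le_max_right (1:ℝ) ‖w‖; linarith
    calc (1 + ‖w‖) ^ k ≤ (2 * max 1 ‖w‖) ^ k :=
          pow_le_pow_left₀ (by positivity) hbase k
      _ = 2 ^ k * (max 1 ‖w‖) ^ k := by rw [mul_pow]
      _ ≤ 2 ^ k * (1 + ‖w‖ ^ k) := by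
          have hmax : (max 1 ‖w‖ : ℝ) ^ k ≤ 1 + ‖w‖ ^ k := by
            rcases max_cases (1:ℝ) ‖w‖ with ⟨h, _⟩ | ⟨h, _⟩ <;> rw [h]
            · have : (0:ℝ) ≤ ‖w‖ ^ k := by positivity
              simp only [one_pow]; linarith
            · linarith
          have h2k : (0:ℝ) ≤ 2 ^ k := by positivity
          exact mul_le_mul_of_nonneg_left hmax h2k
  calc ‖φ w‖ = |φ w| := rfl
    _ ≤ C * ((1 + ‖w‖) ^ k * |F w|) := hb w
    _ ≤ |C| * ((1 + ‖w‖) ^ k * |F w|) := by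
        apply mul_le_mul_of_nonneg_right (le_abs_self C)
        positivity
    _ ≤ |C| * (2 ^ k * (1 + ‖w‖ ^ k) * |F w|) := by
        apply mul_le_mul_of_nonneg_left _ (abs_nonneg C)
        apply mul_le_mul_of_nonneg_right h1 (abs_nonneg _)
    _ = |C| * (2 ^ k * (‖F w‖ + ‖w‖ ^ k * ‖F w‖)) := by
        rw [Real.norm_eq_abs]; ring

namespace L2L

noncomputable def g (d : ℕ) (f : SchwartzMap (Fin d → ℝ) ℝ) : (Fin d → ℝ) → ℝ :=
  fun w => Psi0 d w * f w

noncomputable def c0 (d : ℕ) : ℝ := (2 * Real.pi) ^ (-(d : ℝ) / 4)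

lemma c0_pos (d : ℕ) : 0 < c0 d := by unfold c0; positivity

lemma abs_g_le (d : ℕ) (f : SchwartzMap (Fin d → ℝ) ℝ) (w : Fin d → ℝ) :
    |g d f w| ≤ c0 d * |f w| := by
  rw [g, abs_mul, abs_of_pos (psi0_pos d w)]
  exact mul_le_mul_of_nonneg_right (psi0_le d w) (abs_nonneg _)

lemma g_diff (d : ℕ) (f : SchwartzMap (Fin d → ℝ) ℝ) : Differentiable ℝ (g d f) :=
  (psi0_diff d).mul f.differentiable

lemma g_cont (d : ℕ) (f : SchwartzMap (Fin d → ℝ) ℝ) : Continuous (g d f) :=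
  (g_diff d f).continuous

noncomputable def fp (d : ℕ) (f : SchwartzMap (Fin d → ℝ) ℝ) (j : Fin d) :
    SchwartzMap (Fin d → ℝ) ℝ :=
  LineDeriv.lineDerivOpCLM ℝ (SchwartzMap (Fin d → ℝ) ℝ) (Pi.single j (1:ℝ) : Fin d → ℝ) f

lemma fp_apply (d : ℕ) (f : SchwartzMap (Fin d → ℝ) ℝ) (j : Fin d) (w : Fin d → ℝ) :
    fp d f j w = fderiv ℝ f w (Pi.single j 1) := rfl

lemma pd_g (d : ℕ) (f : SchwartzMap (Fin d → ℝ) ℝ) (j : Fin d) (w : Fin d → ℝ) :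
    pd d j (g d f) w = Psi0 d w * fp d f j w + (-(w j) / 2 * Psi0 d w) * f w := by
  have h1 := (psi0_hasFDerivAt d w).fun_mul (f.differentiableAt.hasFDerivAt)
  rw [pd]
  show fderiv ℝ (fun y => Psi0 d y * f y) w (Pi.single j 1) = _
  rw [h1.fderiv]
  simp only [ContinuousLinearMap.add_apply, ContinuousLinearMap.smul_apply,
    ContinuousLinearMap.coe_smul', Pi.smul_apply, smul_eq_mul]
  rw [fp_apply, ell_single]
  ring

lemma pd_g_cont (d : ℕ) (f : SchwartzMap (Fin d → ℝ) ℝ) (j : Fin d) :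
    Continuous (pd d j (g d f)) := by
  have : pd d j (g d f) = fun w =>
      Psi0 d w * fp d f j w + (-(w j) / 2 * Psi0 d w) * f w := by
    funext w; exact pd_g d f j w
  rw [this]
  have hc : Continuous fun w : Fin d → ℝ => w j := continuous_apply j
  exact ((psi0_cont d).mul (fp d f j).continuous).add
    (((hc.neg.div_const 2).mul (psi0_cont d)).mul f.continuous)

lemma norm_sub_le' (d : ℕ) (u w : Fin d → ℝ) :
    ‖u - w‖ ≤ (1 + ‖u‖) * (1 + ‖w‖) := by
  have h := norm_sub_le u w
  have h1 : (0:ℝ) ≤ ‖u‖ := norm_nonneg _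
  have h2 : (0:ℝ) ≤ ‖w‖ := norm_nonneg _
  nlinarith

lemma abs_aMat_sub_le (d : ℕ) (i j : Fin d) (u w : Fin d → ℝ) :
    |aMat d i j (u - w)| ≤ ((d:ℝ) + 1) * (1 + ‖u‖) ^ 2 * (1 + ‖w‖) ^ 2 := by
  calc |aMat d i j (u - w)| ≤ ((d:ℝ) + 1) * ‖u - w‖ ^ 2 := abs_aMat_le d i j _
    _ ≤ ((d:ℝ) + 1) * ((1 + ‖u‖) * (1 + ‖w‖)) ^ 2 := by
        apply mul_le_mul_of_nonneg_left _ (by positivity)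
        exact pow_le_pow_left₀ (norm_nonneg _) (norm_sub_le' d u w) 2
    _ = ((d:ℝ) + 1) * (1 + ‖u‖) ^ 2 * (1 + ‖w‖) ^ 2 := by ring

/-- integrability of (polynomially bounded) × g -/
lemma integrable_poly_g (d : ℕ) (f : SchwartzMap (Fin d → ℝ) ℝ) (P : (Fin d → ℝ) → ℝ)
    (hP : Continuous P) (k : ℕ) (C : ℝ) (hb : ∀ w, |P w| ≤ C * (1 + ‖w‖) ^ k) :
    Integrable (fun w => P w * g d f w) volume := by
  apply integrable_of_poly_bound d k f (C * c0 d)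
  · exact (hP.mul (g_cont d f)).aestronglyMeasurable
  · intro w
    rw [abs_mul]
    calc |P w| * |g d f w| ≤ (C * (1 + ‖w‖) ^ k) * (c0 d * |f w|) := by
          apply mul_le_mul (hb w) (abs_g_le d f w) (abs_nonneg _)
          exact le_trans (abs_nonneg (P w)) (hb w)
      _ = C * c0 d * ((1 + ‖w‖) ^ k * |f w|) := by ring

lemma integrable_aMat_g (d : ℕ) (f : SchwartzMap (Fin d → ℝ) ℝ) (i j : Fin d)
    (u : Fin d → ℝ) :
    Integrable (fun w => aMat d i j (u - w) * g d f w) volume := by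
  apply integrable_poly_g d f _ (aMat_cont d i j u) 2 (((d:ℝ) + 1) * (1 + ‖u‖) ^ 2)
  intro w
  simpa [mul_assoc] using abs_aMat_sub_le d i j u w

lemma integrable_ite_g (d : ℕ) (f : SchwartzMap (Fin d → ℝ) ℝ) (i j : Fin d)
    (u : Fin d → ℝ) :
    Integrable (fun w => (if i = j then 0 else u i - w i) * g d f w) volume := by
  apply integrable_poly_g d f _ ?_ 1 (1 + ‖u‖)
  · intro w
    have hui : |u i| ≤ ‖u‖ := by simpa using norm_le_pi_norm u i
    have hwi : |w i| ≤ ‖w‖ := by simpa using norm_le_pi_norm w i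
    have h0 : (0:ℝ) ≤ ‖u‖ := norm_nonneg _
    have h0' : (0:ℝ) ≤ ‖w‖ := norm_nonneg _
    split
    · simp; nlinarith
    · calc |u i - w i| ≤ |u i| + |w i| := abs_sub (u i) (w i)
        _ ≤ (1 + ‖u‖) * (1 + ‖w‖) ^ 1 := by nlinarith
  · by_cases h : i = j <;> simp [h] <;> fun_prop

lemma integrable_mono_g (d : ℕ) (f : SchwartzMap (Fin d → ℝ) ℝ) (a : Fin d) :
    Integrable (fun w => w a * g d f w) volume := by
  apply integrable_poly_g d f _ (continuous_apply a) 1 1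
  intro w
  have hwa : |w a| ≤ ‖w‖ := by simpa using norm_le_pi_norm w a
  have h0' : (0:ℝ) ≤ ‖w‖ := norm_nonneg _
  nlinarith

lemma integrable_mono2_g (d : ℕ) (f : SchwartzMap (Fin d → ℝ) ℝ) (a b : Fin d) :
    Integrable (fun w => w a * w b * g d f w) volume := by
  apply integrable_poly_g d f _ (by fun_prop) 2 1
  intro w
  have hwa : |w a| ≤ ‖w‖ := by simpa using norm_le_pi_norm w a
  have hwb : |w b| ≤ ‖w‖ := by simpa using norm_le_pi_norm w b
  have h0' : (0:ℝ) ≤ ‖w‖ := norm_nonneg _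
  rw [abs_mul]
  nlinarith [abs_nonneg (w a), abs_nonneg (w b)]

lemma integrable_g (d : ℕ) (f : SchwartzMap (Fin d → ℝ) ℝ) :
    Integrable (g d f) volume := by
  have := integrable_poly_g d f (fun _ => 1) continuous_const 0 1 (by intro w; norm_num)
  simpa using this

lemma integrable_aMat_pdg (d : ℕ) (f : SchwartzMap (Fin d → ℝ) ℝ) (i j : Fin d)
    (u : Fin d → ℝ) :
    Integrable (fun w => aMat d i j (u - w) * pd d j (g d f) w) volume := by
  have heq : (fun w => aMat d i j (u - w) * pd d j (g d f) w)
      = (fun w => aMat d i j (u - w) * Psi0 d w * fp d f j w)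
        + (fun w => aMat d i j (u - w) * (-(w j) / 2 * Psi0 d w) * f w) := by
    funext w
    simp only [Pi.add_apply]
    rw [pd_g]
    ring
  rw [heq]
  apply Integrable.add
  · have : (fun w => aMat d i j (u - w) * Psi0 d w * fp d f j w)
        = fun w => aMat d i j (u - w) * g d (fp d f j) w := by
      funext w; rw [g]; ring
    rw [this]
    exact integrable_aMat_g d (fp d f j) i j u
  · apply integrable_of_poly_bound d 3 f (((d:ℝ) + 1) * (1 + ‖u‖) ^ 2 * c0 d)
    · apply Continuous.aestronglyMeasurable
      have := aMat_cont d i j u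
      have := psi0_cont d
      have := f.continuous
      fun_prop
    · intro w
      have h1 := abs_aMat_sub_le d i j u w
      have hwj : |w j| ≤ ‖w‖ := by simpa using norm_le_pi_norm w j
      have hpsi : |Psi0 d w| ≤ c0 d := by
        rw [abs_of_pos (psi0_pos d w)]; exact psi0_le d w
      have h0' : (0:ℝ) ≤ ‖w‖ := norm_nonneg _
      have h0u : (0:ℝ) ≤ (1 + ‖u‖) := by positivity
      rw [abs_mul, abs_mul, abs_mul, abs_div]
      have hd1 : (0:ℝ) ≤ (d:ℝ) + 1 := by positivity
      have hB : |-(w j)| / |2| * |Psi0 d w| ≤ (1 + ‖w‖) * c0 d := by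
        rw [abs_neg, abs_two]
        apply mul_le_mul _ hpsi (abs_nonneg _) (by linarith)
        calc |w j| / 2 ≤ |w j| := by linarith [abs_nonneg (w j)]
          _ ≤ 1 + ‖w‖ := by linarith
      have key : |aMat d i j (u - w)| * (|-(w j)| / |2| * |Psi0 d w|) * |f w|
          ≤ (((d:ℝ) + 1) * (1 + ‖u‖) ^ 2 * (1 + ‖w‖) ^ 2) * ((1 + ‖w‖) * c0 d) * |f w| := by
        apply mul_le_mul_of_nonneg_right _ (abs_nonneg _)
        apply mul_le_mul h1 hB (by positivity) (by positivity)
      calc |aMat d i j (u - w)| * (|-(w j)| / |2| * |Psi0 d w|) * |f w|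
          ≤ (((d:ℝ) + 1) * (1 + ‖u‖) ^ 2 * (1 + ‖w‖) ^ 2) * ((1 + ‖w‖) * c0 d) * |f w| := key
        _ = ((d:ℝ) + 1) * (1 + ‖u‖) ^ 2 * c0 d * ((1 + ‖w‖) ^ 3 * |f w|) := by ring

end L2L

namespace L2L

lemma hk_deriv (d : ℕ) (u w : Fin d → ℝ) (k : Fin d) :
    HasFDerivAt (fun w : Fin d → ℝ => u k - w k)
      ((0 : (Fin d → ℝ) →L[ℝ] ℝ) - ContinuousLinearMap.proj k) w :=
  (hasFDerivAt_const (u k) w).sub (hasFDerivAt_apply k w)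

lemma phi_hasFDerivAt (d : ℕ) (i j : Fin d) (u w : Fin d → ℝ) :
    HasFDerivAt (fun w : Fin d → ℝ => aMat d i j (u - w))
      ((if i = j then
          ∑ k : Fin d, ((2:ℝ) * (u k - w k)) •
            ((0 : (Fin d → ℝ) →L[ℝ] ℝ) - ContinuousLinearMap.proj k)
        else 0)
        - ((u i - w i) • ((0 : (Fin d → ℝ) →L[ℝ] ℝ) - ContinuousLinearMap.proj j)
          + (u j - w j) • ((0 : (Fin d → ℝ) →L[ℝ] ℝ) - ContinuousLinearMap.proj i))) w := by
  have hfun : (fun w : Fin d → ℝ => aMat d i j (u - w))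
      = fun w : Fin d → ℝ =>
        (if i = j then ∑ k : Fin d, (u k - w k) ^ 2 else 0) - (u i - w i) * (u j - w j) := by
    funext x
    rw [aMat]
    simp [Pi.sub_apply]
  rw [hfun]
  apply HasFDerivAt.sub
  · by_cases h : i = j
    · simp only [h, if_true]
      apply HasFDerivAt.fun_sum
      intro k _
      have hm := (hk_deriv d u w k).fun_mul (hk_deriv d u w k)
      have : (fun w : Fin d → ℝ => (u k - w k) ^ 2)
          = fun w : Fin d → ℝ => (u k - w k) * (u k - w k) := by funext x; ring
      rw [this]
      refine hm.congr_fderiv ?_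
      rw [two_mul, add_smul]
    · simp only [h, if_false]
      exact hasFDerivAt_const 0 w
  · exact (hk_deriv d u w i).mul (hk_deriv d u w j)

lemma phi_diff (d : ℕ) (i j : Fin d) (u : Fin d → ℝ) :
    Differentiable ℝ (fun w : Fin d → ℝ => aMat d i j (u - w)) :=
  fun w => (phi_hasFDerivAt d i j u w).differentiableAt

lemma phi_pd (d : ℕ) (i j : Fin d) (u w : Fin d → ℝ) :
    fderiv ℝ (fun w : Fin d → ℝ => aMat d i j (u - w)) w (Pi.single j 1)
      = if i = j then 0 else u i - w i := by
  rw [(phi_hasFDerivAt d i j u w).fderiv]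
  by_cases h : i = j
  · subst h
    simp only [if_true]
    simp only [ContinuousLinearMap.coe_sub', Pi.sub_apply, ContinuousLinearMap.coe_sum',
      Finset.sum_apply, ContinuousLinearMap.smul_apply, ContinuousLinearMap.sub_apply,
      ContinuousLinearMap.zero_apply, ContinuousLinearMap.proj_apply,
      ContinuousLinearMap.add_apply]
    rw [Finset.sum_eq_single i]
    · simp
      ring
    · intro b _ hb
      simp [Pi.single_apply, hb]
    · simp
  · simp only [h, if_false]
    simp only [ContinuousLinearMap.coe_sub', Pi.sub_apply, ContinuousLinearMap.smul_apply,
      ContinuousLinearMap.sub_apply, ContinuousLinearMap.zero_apply,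
      ContinuousLinearMap.proj_apply, ContinuousLinearMap.add_apply,
      ContinuousLinearMap.zero_apply]
    rw [Pi.single_eq_same, Pi.single_eq_of_ne (by exact fun hc => h (hc ▸ rfl))]
    · simp

noncomputable def M0 (d : ℕ) (f : SchwartzMap (Fin d → ℝ) ℝ) : ℝ := ∫ w, g d f w
noncomputable def M1 (d : ℕ) (f : SchwartzMap (Fin d → ℝ) ℝ) (a : Fin d) : ℝ :=
  ∫ w, w a * g d f w
noncomputable def M2 (d : ℕ) (f : SchwartzMap (Fin d → ℝ) ℝ) (a b : Fin d) : ℝ :=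
  ∫ w, w a * w b * g d f w

lemma ibp (d : ℕ) (f : SchwartzMap (Fin d → ℝ) ℝ) (i j : Fin d) (u : Fin d → ℝ) :
    ∫ w, aMat d i j (u - w) * pd d j (g d f) w
      = -(if i = j then 0 else u i * M0 d f - M1 d f i) := by
  have h := integral_mul_fderiv_eq_neg_fderiv_mul_of_integrable (μ := volume)
    (f := fun w : Fin d → ℝ => aMat d i j (u - w)) (g := g d f) (v := Pi.single j 1)
    ?_ ?_ ?_ ?_ ?_
  · rw [show (fun w => aMat d i j (u - w) * pd d j (g d f) w)
        = fun w => aMat d i j (u - w) * fderiv ℝ (g d f) w (Pi.single j 1) from rfl]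
    rw [h]
    congr 1
    by_cases hij : i = j
    · subst hij
      rw [show (∫ x, fderiv ℝ (fun w : Fin d → ℝ => aMat d i i (u - w)) x (Pi.single i 1)
            * g d f x) = ∫ x, (0:ℝ) * g d f x from by
          congr 1; funext x; rw [phi_pd]; simp]
      simp
    · rw [show (∫ x, fderiv ℝ (fun w : Fin d → ℝ => aMat d i j (u - w)) x (Pi.single j 1)
            * g d f x) = ∫ x, (u i - x i) * g d f x from by
          congr 1; funext x; rw [phi_pd]; simp [hij]]
      rw [show (fun x : Fin d → ℝ => (u i - x i) * g d f x)
            = fun x => u i * g d f x - x i * g d f x from by funext x; ring]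
      rw [integral_sub ((integrable_g d f).const_mul _) (integrable_mono_g d f i),
        MeasureTheory.integral_const_mul]
      simp [hij, M0, M1]
  · rw [show (fun x : Fin d → ℝ => fderiv ℝ (fun w : Fin d → ℝ => aMat d i j (u - w)) x
        (Pi.single j 1) * g d f x)
      = fun x => (if i = j then 0 else u i - x i) * g d f x from by
        funext x; rw [phi_pd]]
    exact integrable_ite_g d f i j u
  · exact integrable_aMat_pdg d f i j u
  · exact integrable_aMat_g d f i j u
  · exact fun x _ => phi_diff d i j u x
  · exact fun x _ => g_diff d f x

lemma bracket (d : ℕ) (i : Fin d) (u w : Fin d → ℝ) :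
    ∑ j : Fin d, u j * aMat d i j (u - w)
      = (∑ k ∈ Finset.univ.filter (fun k => k ≠ i),
          ((u k) ^ 2 * w i - 2 * u k * (w i * w k)))
        - ∑ j ∈ Finset.univ.filter (fun j => j ≠ i),
          (u i * u j * w j - u i * (w j) ^ 2 - u j * (w i * w j)) := by
  have hfe : ∀ (F : Fin d → ℝ), ∑ k ∈ Finset.univ.filter (fun k => k ≠ i), F k
      = (∑ k : Fin d, F k) - F i := by
    intro F
    rw [Finset.filter_ne', Finset.sum_erase_eq_sub (Finset.mem_univ i)]
  set A := ∑ k : Fin d, (u k) ^ 2 with hA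
  set B := ∑ k : Fin d, u k * w k with hB
  set C := ∑ k : Fin d, (w k) ^ 2 with hC
  have hz : ∑ k : Fin d, ((u - w) k) ^ 2 = A - 2 * B + C := by
    simp only [Pi.sub_apply, sub_sq]
    rw [Finset.sum_add_distrib, Finset.sum_sub_distrib]
    simp only [mul_assoc, ← Finset.mul_sum]
    rfl
  have hL : ∑ j : Fin d, u j * aMat d i j (u - w)
      = u i * (A - 2 * B + C) - (u i - w i) * (A - B) := by
    unfold aMat
    have : ∀ j : Fin d, u j * ((if i = j then ∑ k : Fin d, ((u - w) k) ^ 2 else 0)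
        - (u - w) i * (u - w) j)
        = (if i = j then u j * (A - 2 * B + C) else 0)
          - ((u i - w i) * (u j * u j - u j * w j)) := by
      intro j
      rw [hz]
      by_cases h : i = j <;> simp [h, Pi.sub_apply] <;> ring
    rw [Finset.sum_congr rfl (fun j _ => this j), Finset.sum_sub_distrib,
      Finset.sum_ite_eq Finset.univ i (fun j => u j * (A - 2 * B + C))]
    simp only [Finset.mem_univ, if_true]
    have e0 : ∑ j : Fin d, (u i - w i) * (u j * u j - u j * w j)
        = (u i - w i) * (A - B) := by
      rw [← Finset.mul_sum, Finset.sum_sub_distrib]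
      have e1 : ∑ j : Fin d, u j * u j = A := by
        rw [hA]; exact Finset.sum_congr rfl (fun k _ => by ring)
      rw [e1, hB]
    rw [e0]
  rw [hL, hfe, hfe]
  have h1 : ∑ k : Fin d, ((u k) ^ 2 * w i - 2 * u k * (w i * w k))
      = A * w i - 2 * w i * B := by
    have e1 : ∑ k : Fin d, (u k) ^ 2 * w i = A * w i := by
      rw [← Finset.sum_mul]
    have e2 : ∑ k : Fin d, 2 * u k * (w i * w k) = 2 * w i * B := by
      rw [hB, Finset.mul_sum]; exact Finset.sum_congr rfl (fun k _ => by ring)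
    rw [Finset.sum_sub_distrib, e1, e2]
  have h2 : ∑ j : Fin d, (u i * u j * w j - u i * (w j) ^ 2 - u j * (w i * w j))
      = u i * B - u i * C - w i * B := by
    have e1 : ∑ j : Fin d, u i * u j * w j = u i * B := by
      rw [hB, Finset.mul_sum]; exact Finset.sum_congr rfl (fun k _ => by ring)
    have e2 : ∑ j : Fin d, u i * (w j) ^ 2 = u i * C := by
      rw [hC, Finset.mul_sum]
    have e3 : ∑ j : Fin d, u j * (w i * w j) = w i * B := by
      rw [hB, Finset.mul_sum]; exact Finset.sum_congr rfl (fun k _ => by ring)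
    rw [Finset.sum_sub_distrib, Finset.sum_sub_distrib, e1, e2, e3]
  rw [h1, h2]
  ring

lemma Tsplit (d : ℕ) (f : SchwartzMap (Fin d → ℝ) ℝ) (i : Fin d) (u : Fin d → ℝ) :
    ∫ w, (∑ j : Fin d, u j * aMat d i j (u - w)) * g d f w
      = (∑ k ∈ Finset.univ.filter (fun k => k ≠ i),
          ((u k) ^ 2 * M1 d f i - 2 * u k * M2 d f i k))
        - ∑ j ∈ Finset.univ.filter (fun j => j ≠ i),
          (u i * u j * M1 d f j - u i * M2 d f j j - u j * M2 d f i j) := by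
  have I1 := integrable_mono_g d f
  have I2 := integrable_mono2_g d f
  have J1 : ∀ k : Fin d, Integrable (fun w : Fin d → ℝ =>
      (u k) ^ 2 * (w i * g d f w) - (2 * u k) * (w i * w k * g d f w)) volume := by
    intro k
    exact ((I1 i).const_mul _).sub ((I2 i k).const_mul _)
  have J2 : ∀ j : Fin d, Integrable (fun w : Fin d → ℝ =>
      (u i * u j) * (w j * g d f w) - u i * (w j * w j * g d f w)
        - u j * (w i * w j * g d f w)) volume := by
    intro j
    exact (((I1 j).const_mul _).sub ((I2 j j).const_mul _)).sub ((I2 i j).const_mul _)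
  have J2a : ∀ j : Fin d, Integrable (fun w : Fin d → ℝ =>
      (u i * u j) * (w j * g d f w) - u i * (w j * w j * g d f w)) volume := by
    intro j
    exact ((I1 j).const_mul _).sub ((I2 j j).const_mul _)
  have hreshape : (fun w => (∑ j : Fin d, u j * aMat d i j (u - w)) * g d f w)
      = fun w => (∑ k ∈ Finset.univ.filter (fun k => k ≠ i),
          ((u k) ^ 2 * (w i * g d f w) - (2 * u k) * (w i * w k * g d f w)))
        - ∑ j ∈ Finset.univ.filter (fun j => j ≠ i),
          ((u i * u j) * (w j * g d f w) - u i * (w j * w j * g d f w)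
            - u j * (w i * w j * g d f w)) := by
    funext w
    rw [bracket d i u w, sub_mul, Finset.sum_mul, Finset.sum_mul]
    congr 1
    · exact Finset.sum_congr rfl (fun k _ => by ring)
    · exact Finset.sum_congr rfl (fun j _ => by ring)
  have hterm1 : ∀ k : Fin d,
      ∫ w, ((u k) ^ 2 * (w i * g d f w) - (2 * u k) * (w i * w k * g d f w))
        = (u k) ^ 2 * M1 d f i - 2 * u k * M2 d f i k := by
    intro k
    rw [integral_sub ((I1 i).const_mul _) ((I2 i k).const_mul _),
      MeasureTheory.integral_const_mul, MeasureTheory.integral_const_mul, M1, M2, mul_assoc]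
  have hterm2 : ∀ j : Fin d,
      ∫ w, ((u i * u j) * (w j * g d f w) - u i * (w j * w j * g d f w)
          - u j * (w i * w j * g d f w))
        = u i * u j * M1 d f j - u i * M2 d f j j - u j * M2 d f i j := by
    intro j
    rw [integral_sub (J2a j) ((I2 i j).const_mul _),
      integral_sub ((I1 j).const_mul _) ((I2 j j).const_mul _),
      MeasureTheory.integral_const_mul, MeasureTheory.integral_const_mul,
      MeasureTheory.integral_const_mul, M1, M2, M2]
  rw [hreshape]
  rw [integral_sub (integrable_finset_sum _ (fun k _ => J1 k))
      (integrable_finset_sum _ (fun j _ => J2 j)),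
    integral_finset_sum _ (fun k _ => J1 k),
    integral_finset_sum _ (fun j _ => J2 j)]
  rw [Finset.sum_congr rfl (fun k _ => hterm1 k), Finset.sum_congr rfl (fun j _ => hterm2 j)]

noncomputable def Sfun (d : ℕ) (f : SchwartzMap (Fin d → ℝ) ℝ) (i : Fin d)
    (u : Fin d → ℝ) : ℝ :=
  ((d : ℝ) - 1) * (u i * M0 d f - M1 d f i)
    - ((∑ k ∈ Finset.univ.filter (fun k => k ≠ i),
          ((u k) ^ 2 * M1 d f i - 2 * u k * M2 d f i k))
        - ∑ j ∈ Finset.univ.filter (fun j => j ≠ i),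
          (u i * u j * M1 d f j - u i * M2 d f j j - u j * M2 d f i j))

lemma sum_ite_count (d : ℕ) (i : Fin d) (Y : ℝ) :
    ∑ j : Fin d, (if i = j then 0 else Y) = ((d : ℝ) - 1) * Y := by
  have : ∀ j : Fin d, (if i = j then (0:ℝ) else Y) = Y - (if i = j then Y else 0) := by
    intro j
    by_cases h : i = j <;> simp [h]
  rw [Finset.sum_congr rfl (fun j _ => this j), Finset.sum_sub_distrib,
    Finset.sum_ite_eq Finset.univ i (fun _ => Y)]
  simp [Finset.card_univ, mul_comm]
  ring

lemma inner_eq (d : ℕ) (f : SchwartzMap (Fin d → ℝ) ℝ) (i : Fin d) :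
    (fun u => ∑ j : Fin d, ∫ w : Fin d → ℝ,
        aMat d i j (u - w) * (g d f w * pd d j (maxw d) u - pd d j (g d f) w * maxw d u))
      = fun u => maxw d u * Sfun d f i u := by
  funext u
  have hsplit : ∀ j : Fin d,
      (∫ w : Fin d → ℝ, aMat d i j (u - w)
          * (g d f w * pd d j (maxw d) u - pd d j (g d f) w * maxw d u))
        = (-(u j) * maxw d u) * (∫ w, aMat d i j (u - w) * g d f w)
          - maxw d u * ∫ w, aMat d i j (u - w) * pd d j (g d f) w := by
    intro j
    rw [show (fun w => aMat d i j (u - w)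
          * (g d f w * pd d j (maxw d) u - pd d j (g d f) w * maxw d u))
        = fun w => (-(u j) * maxw d u) * (aMat d i j (u - w) * g d f w)
            - maxw d u * (aMat d i j (u - w) * pd d j (g d f) w) from by
        funext w; rw [pd_maxw]; ring]
    rw [integral_sub ((integrable_aMat_g d f i j u).const_mul _)
        ((integrable_aMat_pdg d f i j u).const_mul _),
      MeasureTheory.integral_const_mul, MeasureTheory.integral_const_mul]
  rw [Finset.sum_congr rfl (fun j _ => hsplit j), Finset.sum_sub_distrib]
  have hpart2 : ∑ j : Fin d, maxw d u * ∫ w, aMat d i j (u - w) * pd d j (g d f) w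
      = -(maxw d u * (((d:ℝ) - 1) * (u i * M0 d f - M1 d f i))) := by
    have : ∀ j : Fin d, maxw d u * ∫ w, aMat d i j (u - w) * pd d j (g d f) w
        = -(maxw d u * (if i = j then 0 else u i * M0 d f - M1 d f i)) := by
      intro j
      rw [ibp d f i j u]
      ring
    rw [Finset.sum_congr rfl (fun j _ => this j), Finset.sum_neg_distrib,
      ← Finset.mul_sum, sum_ite_count d i]
  have hpart1 : ∑ j : Fin d, (-(u j) * maxw d u) * (∫ w, aMat d i j (u - w) * g d f w)
      = -(maxw d u * ((∑ k ∈ Finset.univ.filter (fun k => k ≠ i),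
          ((u k) ^ 2 * M1 d f i - 2 * u k * M2 d f i k))
        - ∑ j ∈ Finset.univ.filter (fun j => j ≠ i),
          (u i * u j * M1 d f j - u i * M2 d f j j - u j * M2 d f i j))) := by
    have step1 : ∀ j : Fin d, (-(u j) * maxw d u) * (∫ w, aMat d i j (u - w) * g d f w)
        = -(maxw d u) * ∫ w, u j * aMat d i j (u - w) * g d f w := by
      intro j
      rw [show (fun w => u j * aMat d i j (u - w) * g d f w)
          = fun w => u j * (aMat d i j (u - w) * g d f w) from by funext w; ring,
        MeasureTheory.integral_const_mul]
      ring
    rw [Finset.sum_congr rfl (fun j _ => step1 j), ← Finset.mul_sum]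
    have step2 : ∑ j : Fin d, ∫ w, u j * aMat d i j (u - w) * g d f w
        = ∫ w, (∑ j : Fin d, u j * aMat d i j (u - w)) * g d f w := by
      rw [← integral_finset_sum]
      · congr 1
        funext w
        rw [Finset.sum_mul]
      · intro j _
        rw [show (fun w => u j * aMat d i j (u - w) * g d f w)
            = fun w => u j * (aMat d i j (u - w) * g d f w) from by funext w; ring]
        exact (integrable_aMat_g d f i j u).const_mul _
    rw [step2, Tsplit d f i u]
    ring
  rw [hpart1, hpart2, Sfun]
  ring

lemma sq_apply_hasFDerivAt (d : ℕ) (k : Fin d) (v : Fin d → ℝ) :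
    HasFDerivAt (fun u : Fin d → ℝ => (u k) ^ 2)
      (((2:ℝ) * v k) • ContinuousLinearMap.proj (R := ℝ) (φ := fun _ : Fin d => ℝ) k) v := by
  have h := hasFDerivAt_apply (𝕜 := ℝ) k v
  have hm := h.mul h
  have he : (fun u : Fin d → ℝ => (u k) ^ 2) = fun u : Fin d → ℝ => u k * u k := by
    funext x; ring
  have hc : ((2:ℝ) * v k) • (ContinuousLinearMap.proj (R := ℝ) (φ := fun _ : Fin d => ℝ) k)
      = v k • ContinuousLinearMap.proj k + v k • ContinuousLinearMap.proj k := by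
    rw [two_mul, add_smul]
  rw [he, hc]
  exact hm

lemma pd_DS (d : ℕ) (f : SchwartzMap (Fin d → ℝ) ℝ) (i : Fin d) (v : Fin d → ℝ) :
    pd d i (fun u => maxw d u * Sfun d f i u) v
      = maxw d v * (((((d:ℝ)-1) * M0 d f
          + ∑ j ∈ Finset.univ.filter (fun j => j ≠ i), (v j * M1 d f j - M2 d f j j)))
        - v i * Sfun d f i v) := by
  have h1 := (((hasFDerivAt_apply (𝕜 := ℝ) i v).mul_const (M0 d f)).sub_const
    (M1 d f i)).const_mul ((d:ℝ) - 1)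
  have hsum1 := HasFDerivAt.fun_sum (u := Finset.univ.filter (fun k => k ≠ i))
    (fun k _ => ((sq_apply_hasFDerivAt d k v).mul_const (M1 d f i)).fun_sub
      (((hasFDerivAt_apply (𝕜 := ℝ) k v).const_mul 2).mul_const (M2 d f i k)))
  have hsum2 := HasFDerivAt.fun_sum (u := Finset.univ.filter (fun j => j ≠ i))
    (fun j _ => ((((hasFDerivAt_apply (𝕜 := ℝ) i v).fun_mul
        (hasFDerivAt_apply (𝕜 := ℝ) j v)).mul_const (M1 d f j)).fun_sub
          ((hasFDerivAt_apply (𝕜 := ℝ) i v).mul_const (M2 d f j j))).fun_sub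
        ((hasFDerivAt_apply (𝕜 := ℝ) j v).mul_const (M2 d f i j)))
  have hbig := h1.fun_sub (hsum1.fun_sub hsum2)
  have htot := (maxw_hasFDerivAt d v).fun_mul
    (show HasFDerivAt (Sfun d f i) _ v from hbig)
  rw [pd, (show HasFDerivAt (fun u => maxw d u * Sfun d f i u) _ v from htot).fderiv]
  simp only [ContinuousLinearMap.add_apply, ContinuousLinearMap.sub_apply,
    ContinuousLinearMap.smul_apply, ContinuousLinearMap.coe_sum', Finset.sum_apply,
    ContinuousLinearMap.proj_apply, ContinuousLinearMap.coe_smul', Pi.smul_apply,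
    smul_eq_mul, ell_single, ContinuousLinearMap.neg_apply, Pi.single_eq_same]
  have hz : ∀ x : Fin d, x ∈ Finset.univ.filter (fun k => k ≠ i) →
      (Pi.single i 1 : Fin d → ℝ) x = 0 := by
    intro x hx
    rw [Finset.mem_filter] at hx
    exact Pi.single_eq_of_ne hx.2 1
  have e1 : ∑ x ∈ Finset.univ.filter (fun k => k ≠ i),
      (M1 d f i * (2 * v x * (Pi.single i 1 : Fin d → ℝ) x) - M2 d f i x * (2 * (Pi.single i 1 : Fin d → ℝ) x))
      = 0 :=
    Finset.sum_eq_zero (fun x hx => by simp only [hz x hx]; ring)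
  have e2 : ∑ x ∈ Finset.univ.filter (fun k => k ≠ i),
      (M1 d f x * (v i * (Pi.single i 1 : Fin d → ℝ) x + v x * 1) - M2 d f x x * 1
        - M2 d f i x * (Pi.single i 1 : Fin d → ℝ) x)
      = ∑ x ∈ Finset.univ.filter (fun k => k ≠ i), (v x * M1 d f x - M2 d f x x) :=
    Finset.sum_congr rfl (fun x hx => by simp only [hz x hx]; ring)
  rw [e1, e2]
  ring

lemma sum_filter_ne_eq (d : ℕ) (i : Fin d) (F : Fin d → ℝ) :
    ∑ j ∈ Finset.univ.filter (fun j => j ≠ i), F j = (∑ j : Fin d, F j) - F i := by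
  rw [Finset.filter_ne', Finset.sum_erase_eq_sub (Finset.mem_univ i)]

lemma final_algebra (d : ℕ) (m0 : ℝ) (m1 : Fin d → ℝ) (m2 : Fin d → Fin d → ℝ)
    (v : Fin d → ℝ) :
    -(∑ i : Fin d, (((((d:ℝ)-1) * m0
        + ∑ j ∈ Finset.univ.filter (fun j => j ≠ i), (v j * m1 j - m2 j j)))
      - v i * (((d:ℝ)-1) * (v i * m0 - m1 i)
        - ((∑ k ∈ Finset.univ.filter (fun k => k ≠ i),
            ((v k)^2 * m1 i - 2 * v k * m2 i k))
          - ∑ j ∈ Finset.univ.filter (fun j => j ≠ i),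
            (v i * v j * m1 j - v i * m2 j j - v j * m2 i j)))))
    = -2*((d:ℝ)-1) * (∑ j : Fin d, m1 j * v j)
      + (∑ i : Fin d, ∑ j ∈ Finset.univ.filter (fun j => j ≠ i), m2 i j * (v i * v j))
      - (∑ i : Fin d, ∑ j ∈ Finset.univ.filter (fun j => j ≠ i),
          (m2 i i - m0) * ((v j)^2 - 1)) := by
  have a1d : ∑ j : Fin d, m1 j * v j = ∑ j : Fin d, v j * m1 j :=
    Finset.sum_congr rfl (fun j _ => by ring)
  have hP : ∀ i : Fin d, ∑ j ∈ Finset.univ.filter (fun j => j ≠ i), (v j * m1 j - m2 j j)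
      = ((∑ j : Fin d, v j * m1 j) - (∑ j : Fin d, m2 j j)) - (v i * m1 i - m2 i i) := by
    intro i
    rw [sum_filter_ne_eq, Finset.sum_sub_distrib]
  have hS1 : ∀ i : Fin d, ∑ k ∈ Finset.univ.filter (fun k => k ≠ i),
      ((v k)^2 * m1 i - 2 * v k * m2 i k)
      = ((∑ k : Fin d, (v k)^2) * m1 i - 2 * (∑ k : Fin d, v k * m2 i k))
        - ((v i)^2 * m1 i - 2 * v i * m2 i i) := by
    intro i
    rw [sum_filter_ne_eq]
    congr 1
    rw [Finset.sum_sub_distrib, ← Finset.sum_mul]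
    congr 1
    rw [Finset.mul_sum]
    exact Finset.sum_congr rfl (fun k _ => by ring)
  have hS2 : ∀ i : Fin d, ∑ j ∈ Finset.univ.filter (fun j => j ≠ i),
      (v i * v j * m1 j - v i * m2 j j - v j * m2 i j)
      = (v i * (∑ j : Fin d, v j * m1 j) - v i * (∑ j : Fin d, m2 j j)
          - (∑ j : Fin d, v j * m2 i j))
        - (v i * v i * m1 i - v i * m2 i i - v i * m2 i i) := by
    intro i
    rw [sum_filter_ne_eq]
    congr 1
    rw [Finset.sum_sub_distrib, Finset.sum_sub_distrib]
    congr 2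
    · rw [Finset.mul_sum]
      exact Finset.sum_congr rfl (fun j _ => by ring)
    · rw [Finset.mul_sum]
  have key : ∀ i : Fin d, ((((d:ℝ)-1) * m0
        + ∑ j ∈ Finset.univ.filter (fun j => j ≠ i), (v j * m1 j - m2 j j))
      - v i * (((d:ℝ)-1) * (v i * m0 - m1 i)
        - ((∑ k ∈ Finset.univ.filter (fun k => k ≠ i),
            ((v k)^2 * m1 i - 2 * v k * m2 i k))
          - ∑ j ∈ Finset.univ.filter (fun j => j ≠ i),
            (v i * v j * m1 j - v i * m2 j j - v j * m2 i j))))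
      = (((d:ℝ)-1) * m0 + ((∑ j : Fin d, v j * m1 j) - (∑ j : Fin d, m2 j j)))
        - (v i * m1 i) + (m2 i i)
        - (((d:ℝ)-1) * m0) * ((v i)^2)
        + (((d:ℝ)-1) + (∑ k : Fin d, (v k)^2)) * (v i * m1 i)
        - (v i * (∑ j : Fin d, v j * m2 i j))
        - ((∑ j : Fin d, v j * m1 j) - (∑ j : Fin d, m2 j j)) * ((v i)^2) := by
    intro i
    rw [hP i, hS1 i, hS2 i]
    ring
  rw [Finset.sum_congr rfl (fun i _ => key i)]
  have hT2 : ∀ i : Fin d, ∑ j ∈ Finset.univ.filter (fun j => j ≠ i), m2 i j * (v i * v j)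
      = (v i * (∑ j : Fin d, v j * m2 i j)) - (m2 i i * (v i)^2) := by
    intro i
    rw [sum_filter_ne_eq]
    congr 1
    · rw [Finset.mul_sum]
      exact Finset.sum_congr rfl (fun j _ => by ring)
    · ring
  have hT3 : ∀ i : Fin d, ∑ j ∈ Finset.univ.filter (fun j => j ≠ i),
      ((m2 i i - m0) * ((v j)^2 - 1))
      = ((∑ k : Fin d, (v k)^2) - (d:ℝ)) * (m2 i i)
        - ((∑ k : Fin d, (v k)^2) - (d:ℝ)) * m0
        - (m2 i i * (v i)^2) + m2 i i + m0 * ((v i)^2) - m0 := by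
    intro i
    rw [sum_filter_ne_eq]
    have hfull : ∑ j : Fin d, ((m2 i i - m0) * ((v j)^2 - 1))
        = (m2 i i - m0) * ((∑ k : Fin d, (v k)^2) - (d:ℝ)) := by
      rw [← Finset.mul_sum]
      congr 1
      rw [Finset.sum_sub_distrib]
      simp [Finset.card_univ]
    rw [hfull]
    ring
  rw [Finset.sum_congr rfl (fun i _ => hT2 i), Finset.sum_congr rfl (fun i _ => hT3 i), a1d]
  simp only [Finset.sum_sub_distrib, Finset.sum_add_distrib, ← Finset.mul_sum,
    Finset.sum_const, Finset.card_univ, Fintype.card_fin, nsmul_eq_mul]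
  ring

lemma intPhiH (d : ℕ) (f : SchwartzMap (Fin d → ℝ) ℝ) (j : Fin d) :
    ∫ w, f w * PhiH d j w = M1 d f j := by
  rw [M1]
  congr 1
  funext w
  rw [PhiH, g]
  ring

lemma intPhiH2 (d : ℕ) (f : SchwartzMap (Fin d → ℝ) ℝ) (i j : Fin d) :
    ∫ w, f w * PhiH2 d i j w = M2 d f i j := by
  rw [M2]
  congr 1
  funext w
  rw [PhiH2, g]
  ring

lemma intThetaH (d : ℕ) (f : SchwartzMap (Fin d → ℝ) ℝ) (i : Fin d) :
    ∫ w, f w * ThetaH d i w = (M2 d f i i - M0 d f) / Real.sqrt 2 := by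
  have h1 : (fun w => f w * ThetaH d i w)
      = fun w => (Real.sqrt 2)⁻¹ * (w i * w i * g d f w - g d f w) := by
    funext w
    rw [ThetaH, g]
    ring
  rw [h1, MeasureTheory.integral_const_mul,
    integral_sub (integrable_mono2_g d f i i) (integrable_g d f)]
  rw [M2, M0]
  ring

end L2L


/-- The part `L_{2,L} f = −μ^{-1/2} Q_L(μ^{1/2} f, μ)` of the linearized Landau
operator is the finite-rank operator
`−2(d−1) Σ_j ⟨f,Φ_j⟩ Φ_j + Σ_{i≠j} ⟨f,Φ_{ij}⟩ Φ_{ij} − 2 Σ_{i≠j} ⟨f,Θ_i⟩ Θ_j`. -/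
theorem L2L_finite_rank (d : ℕ) (hd : 2 ≤ d)
    (f : SchwartzMap (Fin d → ℝ) ℝ) (v : Fin d → ℝ) :
    -(Psi0 d v)⁻¹ * QL d (fun w => Psi0 d w * f w) (maxw d) v
      = -2 * ((d : ℝ) - 1) *
          (∑ j : Fin d, (∫ w : Fin d → ℝ, f w * PhiH d j w) * PhiH d j v)
        + (∑ i : Fin d, ∑ j ∈ Finset.univ.filter (fun j => j ≠ i),
            (∫ w : Fin d → ℝ, f w * PhiH2 d i j w) * PhiH2 d i j v)
        - 2 * (∑ i : Fin d, ∑ j ∈ Finset.univ.filter (fun j => j ≠ i),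
            (∫ w : Fin d → ℝ, f w * ThetaH d i w) * ThetaH d j v) := by
  classical
  have hswap : QL d (fun w => Psi0 d w * f w) (maxw d) v
      = QL d (L2L.g d f) (maxw d) v := rfl
  rw [hswap]
  have hQL : QL d (L2L.g d f) (maxw d) v
      = ∑ i : Fin d, maxw d v * (((((d:ℝ)-1) * L2L.M0 d f
          + ∑ j ∈ Finset.univ.filter (fun j => j ≠ i),
            (v j * L2L.M1 d f j - L2L.M2 d f j j)))
        - v i * L2L.Sfun d f i v) := by
    simp only [QL]
    exact Finset.sum_congr rfl (fun i _ => by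
      rw [L2L.inner_eq d f i]; exact L2L.pd_DS d f i v)
  rw [hQL, ← Finset.mul_sum]
  have hPsi : ∀ X : ℝ, -(Psi0 d v)⁻¹ * (maxw d v * X) = Psi0 d v * (-X) := by
    intro X
    rw [maxw_eq_sq]
    have h0 : Psi0 d v ≠ 0 := (psi0_pos d v).ne'
    field_simp
  rw [hPsi _]
  simp only [L2L.Sfun]
  rw [L2L.final_algebra d (L2L.M0 d f) (L2L.M1 d f) (L2L.M2 d f) v]
  have hA : ∑ j : Fin d, (∫ w, f w * PhiH d j w) * PhiH d j v
      = (∑ j : Fin d, L2L.M1 d f j * v j) * Psi0 d v := by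
    rw [Finset.sum_mul]
    exact Finset.sum_congr rfl (fun j _ => by rw [L2L.intPhiH, PhiH]; ring)
  have hB : ∑ i : Fin d, ∑ j ∈ Finset.univ.filter (fun j => j ≠ i),
        (∫ w, f w * PhiH2 d i j w) * PhiH2 d i j v
      = (∑ i : Fin d, ∑ j ∈ Finset.univ.filter (fun j => j ≠ i),
          L2L.M2 d f i j * (v i * v j)) * Psi0 d v := by
    rw [Finset.sum_mul]
    refine Finset.sum_congr rfl (fun i _ => ?_)
    rw [Finset.sum_mul]
    exact Finset.sum_congr rfl (fun j _ => by rw [L2L.intPhiH2, PhiH2]; ring)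
  have h2 : Real.sqrt 2 * Real.sqrt 2 = 2 := Real.mul_self_sqrt (by norm_num)
  have hC2 : 2 * (∑ i : Fin d, ∑ j ∈ Finset.univ.filter (fun j => j ≠ i),
        (∫ w, f w * ThetaH d i w) * ThetaH d j v)
      = (∑ i : Fin d, ∑ j ∈ Finset.univ.filter (fun j => j ≠ i),
          (L2L.M2 d f i i - L2L.M0 d f) * ((v j)^2 - 1)) * Psi0 d v := by
    rw [Finset.mul_sum, Finset.sum_mul]
    refine Finset.sum_congr rfl (fun i _ => ?_)
    rw [Finset.mul_sum, Finset.sum_mul]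
    refine Finset.sum_congr rfl (fun j _ => ?_)
    rw [L2L.intThetaH, ThetaH]
    have e : 2 * ((L2L.M2 d f i i - L2L.M0 d f) / Real.sqrt 2
          * (((v j) ^ 2 - 1) / Real.sqrt 2 * Psi0 d v))
        = 2 * ((L2L.M2 d f i i - L2L.M0 d f) * ((v j) ^ 2 - 1) * Psi0 d v
            / (Real.sqrt 2 * Real.sqrt 2)) := by
      ring
    rw [e, h2]
    ring
  rw [hA, hB, hC2]
  ring
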